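/- Let G be a finite group acting on a finite EI quiver (Q, U), where Q is acyclic. Then the induced G-action on the associated free EI category C(Q,U) is admissible: for any object i and g ∈ G with g(i) ≠ i, the set Hom_{C(Q,U)}(g(i), i) is empty. -/

import Mathlib

open Quiver

section

/- A finite EI quiver `(Q, U)`: a finite acyclic quiver `Q` (vertices `V`, arrows
`a ⟶ b`) together with a finite group `grp i = U(i)` for each vertex `i` and a
nonempty finite `(U(tα), U(sα))`-biset `bis α = U(α)` for each arrow `α`, with
left action `actL` and right action `actR`. -/
variable {V : Type} [Quiver.{1} V]
variable (grp : V → Type) (bis : ∀ a b : V, (a ⟶ b) → Type)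
variable (actL : ∀ (a b : V) (e : a ⟶ b), grp b → bis a b e → bis a b e)
variable (actR : ∀ (a b : V) (e : a ⟶ b), bis a b e → grp a → bis a b e)

/-- Decorated paths: an element of `U(α_n) × ⋯ × U(α_1)` along a path
(for the empty path at `i`, an element of `U(i)`). -/
inductive Dec : ∀ {i j : V}, Path i j → Type 1
  | nil (i : V) (u : grp i) : Dec (Path.nil (a := i))
  | cons {i b c : V} (p : Path i b) (e : b ⟶ c) (x : bis b c e) (d : Dec p) :
      Dec (p.cons e)

variable {grp bis}

/-- The left action of `U(j)` on decorated paths from `i` to `j`. -/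
def decAct [∀ v, Group (grp v)] {i j : V} {p : Path i j} (h : grp j)
    (d : Dec grp bis p) : Dec grp bis p :=
  match d with
  | Dec.nil i u => Dec.nil i (h * u)
  | Dec.cons p e x d => Dec.cons p e (actL _ _ e h x) d

/-- The relation defining the iterated biset product
`U(p) = U(α_n) ×_{U(tα_{n-1})} ⋯ ×_{U(tα_1)} U(α_1)` along a path `p`:
generated by `(x.h, d) ∼ (x, h.d)` and congruence. -/
inductive DecRel [∀ v, Group (grp v)] :
    ∀ {i j : V} {p : Path i j}, Dec grp bis p → Dec grp bis p → Prop
  | swap {i b c : V} (p : Path i b) (e : b ⟶ c) (x : bis b c e) (h : grp b)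
      (d : Dec grp bis p) :
      DecRel (.cons p e (actR b c e x h) d) (.cons p e x (decAct actL h d))
  | consCongr {i b c : V} (p : Path i b) (e : b ⟶ c) (x : bis b c e)
      {d d' : Dec grp bis p} :
      DecRel d d' → DecRel (.cons p e x d) (.cons p e x d')

variable (grp bis) in
/-- The Hom-set `Hom_{C(Q,U)}(i, j)` of the free EI category `C(Q, U)`: the
disjoint union, over all paths `p` from `i` to `j`, of the biset products
`U(p)`. -/
def EIHom [∀ v, Group (grp v)] (i j : V) : Type 1 :=
  Σ p : Path i j, Quot (fun d d' : Dec grp bis p => DecRel actL actR d d')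

theorem my_length_mapPath {V W : Type*} [Quiver V] [Quiver W] (F : V ⥤q W)
    {a b : V} (p : Path a b) : (F.mapPath p).length = p.length := by
  induction p with
  | nil => rfl
  | cons p e ih => simp [Prefunctor.mapPath_cons, ih]

theorem my_length_cast {V : Type*} [Quiver V] {u v u' v' : V}
    (hu : u = u') (hv : v = v') (p : Path u v) :
    (p.cast hu hv).length = p.length := by subst hu; subst hv; rfl

/-- let a finite group `G` act on a finite EI quiver `(Q, U)` (by EI
quiver automorphisms `(σ⁰, σ¹)`), with `Q` acyclic.  Then the induced `G`-action
on the free EI category `C(Q, U)` is admissible: if `g(i) ≠ i` then the Hom-set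
`Hom_{C(Q,U)}(g(i), i)` is empty. -/
theorem eiQuiver_action_admissible
    [∀ v, Group (grp v)]
    -- finiteness of the EI quiver
    [Finite V] [∀ a b : V, Finite (a ⟶ b)] [∀ v, Finite (grp v)]
    [∀ (a b : V) (e : a ⟶ b), Finite (bis a b e)]
    -- the bisets are nonempty
    (hne : ∀ (a b : V) (e : a ⟶ b), Nonempty (bis a b e))
    -- the action axioms making each `bis e` a `(grp b, grp a)`-biset
    (hL1 : ∀ (a b : V) (e : a ⟶ b) (x : bis a b e), actL a b e 1 x = x)
    (hLm : ∀ (a b : V) (e : a ⟶ b) (h h' : grp b) (x : bis a b e),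
      actL a b e (h * h') x = actL a b e h (actL a b e h' x))
    (hR1 : ∀ (a b : V) (e : a ⟶ b) (x : bis a b e), actR a b e x 1 = x)
    (hRm : ∀ (a b : V) (e : a ⟶ b) (x : bis a b e) (k k' : grp a),
      actR a b e x (k * k') = actR a b e (actR a b e x k) k')
    (hLR : ∀ (a b : V) (e : a ⟶ b) (h : grp b) (x : bis a b e) (k : grp a),
      actR a b e (actL a b e h x) k = actL a b e h (actR a b e x k))
    -- `Q` is acyclic
    (hacyclic : ∀ (v : V) (p : Path v v), p.length = 0)
    -- a `G`-action on the EI quiver `(Q,U)`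
    (G : Type) [Group G] [Finite G]
    (vObj : G → V → V)
    (vMap : ∀ (g : G) (a b : V), (a ⟶ b) → (vObj g a ⟶ vObj g b))
    (hvObj_one : ∀ v, vObj 1 v = v)
    (hvObj_mul : ∀ g h v, vObj (g * h) v = vObj g (vObj h v))
    (grpIso : ∀ (g : G) (v : V), grp v ≃* grp (vObj g v))
    (bisIso : ∀ (g : G) (a b : V) (e : a ⟶ b),
      bis a b e ≃ bis (vObj g a) (vObj g b) (vMap g a b e))
    (hbisL : ∀ (g : G) (a b : V) (e : a ⟶ b) (h : grp b) (x : bis a b e),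
      bisIso g a b e (actL a b e h x) =
        actL _ _ (vMap g a b e) (grpIso g b h) (bisIso g a b e x))
    (hbisR : ∀ (g : G) (a b : V) (e : a ⟶ b) (x : bis a b e) (k : grp a),
      bisIso g a b e (actR a b e x k) =
        actR _ _ (vMap g a b e) (bisIso g a b e x) (grpIso g a k))
    -- conclusion: admissibility
    (g : G) (i : V) (hgi : vObj g i ≠ i) :
    IsEmpty (EIHom grp bis actL actR (vObj g i) i) := by
  constructor
  rintro ⟨p, -⟩
  let F : G → V ⥤q V := fun h => ⟨vObj h, fun {a b} e => vMap h a b e⟩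
  have key : ∀ k : ℕ, ∃ q : Path (vObj (g ^ (k + 1)) i) i,
      q.length = (k + 1) * p.length := by
    intro k
    induction k with
    | zero =>
      refine ⟨p.cast ?_ rfl, ?_⟩
      · rw [pow_one]
      · rw [my_length_cast]; omega
    | succ k ih =>
      obtain ⟨q, hq⟩ := ih
      have h1 : vObj (g ^ (k + 1)) (vObj g i) = vObj (g ^ (k + 2)) i := by
        rw [← hvObj_mul, ← pow_succ]
      refine ⟨(((F (g ^ (k + 1))).mapPath p).cast h1 rfl).comp q, ?_⟩
      rw [Path.length_comp, my_length_cast, my_length_mapPath, hq]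
      ring
  obtain ⟨n, hn⟩ := Nat.exists_eq_add_of_lt (orderOf_pos g)
  obtain ⟨q, hq⟩ := key n
  have hni : vObj (g ^ (n + 1)) i = i := by
    rw [show n + 1 = orderOf g by omega, pow_orderOf_eq_one, hvObj_one]
  have h0 := hacyclic i (q.cast hni rfl)
  rw [my_length_cast, hq] at h0
  have hp0 : p.length = 0 := by
    rcases Nat.mul_eq_zero.mp h0 with h | h
    · omega
    · exact h
  exact hgi (Path.eq_of_length_zero p hp0)

end
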